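/- Let $S = K[x_1,\ldots,x_n]$ and let $I \subset S$ be an $\mathfrak{m}$-primary stable monomial ideal such that $x_n$ is a weak Lefschetz element on $S/I$. Let $d = \min\{\deg u : u \in G(I),\ m(u) = n\}$. Then every minimal generator $u \in G(I)$ with $\deg u > d$ satisfies $m(u) = n$. -/

import Mathlib

open MvPolynomial

variable {K : Type*} [Field K] {n : ℕ}

/-- The total degree of an exponent vector. -/
def mdeg {n : ℕ} (m : Fin n →₀ ℕ) : ℕ := m.sum fun _ e => e

/-- `I` is a monomial ideal: it contains every monomial of each of its elements. -/
def IsMonomialIdeal (I : Ideal (MvPolynomial (Fin n) K)) : Prop :=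
  ∀ f ∈ I, ∀ m ∈ f.support, (monomial m (1 : K)) ∈ I

/-- `I` is stable: for every monomial `u ∈ I` with largest dividing variable `x_k`,
and every `i ≤ k`, the monomial `(x_i / x_k) * u` lies in `I`. -/
def IsStableIdeal (I : Ideal (MvPolynomial (Fin n) K)) : Prop :=
  ∀ m : Fin n →₀ ℕ, (monomial m (1 : K)) ∈ I →
    ∀ k i : Fin n, m k ≠ 0 → (∀ k', k < k' → m k' = 0) → i ≤ k →
      (monomial (m + Finsupp.single i 1 - Finsupp.single k 1) (1 : K)) ∈ I

/-- `I` is strongly stable: for every monomial `u ∈ I`, every variable `x_k` dividing `u`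
and every `i ≤ k`, the monomial `(x_i / x_k) * u` lies in `I`. -/
def IsStronglyStableIdeal (I : Ideal (MvPolynomial (Fin n) K)) : Prop :=
  ∀ m : Fin n →₀ ℕ, (monomial m (1 : K)) ∈ I →
    ∀ k i : Fin n, m k ≠ 0 → i ≤ k →
      (monomial (m + Finsupp.single i 1 - Finsupp.single k 1) (1 : K)) ∈ I

/-- `v <_lex u` for exponent vectors, lex order with `x_1 > x_2 > ⋯ > x_n`. -/
def lexLt {n : ℕ} (v u : Fin n →₀ ℕ) : Prop :=
  ∃ i : Fin n, (∀ j < i, v j = u j) ∧ v i < u i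

/-- `I` is a lexsegment ideal. -/
def IsLexsegmentIdeal (I : Ideal (MvPolynomial (Fin n) K)) : Prop :=
  IsMonomialIdeal I ∧
    ∀ u v : Fin n →₀ ℕ, (monomial u (1 : K)) ∈ I → mdeg v = mdeg u → lexLt u v →
      (monomial v (1 : K)) ∈ I

/-- The degree `j` piece of `S/I`, as the image of the degree `j` homogeneous polynomials. -/
noncomputable def Qpiece (I : Ideal (MvPolynomial (Fin n) K)) (j : ℕ) :
    Submodule K (MvPolynomial (Fin n) K ⧸ I) :=
  (homogeneousSubmodule (Fin n) K j).map (Ideal.Quotient.mkₐ K I).toLinearMap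

/-- Multiplication by `g` maps `(S/I)_j` injectively (to `(S/I)_{j'}`). -/
def QInj (I : Ideal (MvPolynomial (Fin n) K)) (g : MvPolynomial (Fin n) K)
    (j _j' : ℕ) : Prop :=
  ∀ f₁ ∈ Qpiece I j, ∀ f₂ ∈ Qpiece I j,
    Ideal.Quotient.mk I g * f₁ = Ideal.Quotient.mk I g * f₂ → f₁ = f₂

/-- Multiplication by `g` maps `(S/I)_j` onto `(S/I)_{j'}`. -/
def QSurj (I : Ideal (MvPolynomial (Fin n) K)) (g : MvPolynomial (Fin n) K)
    (j j' : ℕ) : Prop :=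
  ∀ h ∈ Qpiece I j', ∃ f ∈ Qpiece I j, Ideal.Quotient.mk I g * f = h

/-- Multiplication by `g` from `(S/I)_j` to `(S/I)_{j'}` has maximal rank. -/
def MulMaxRank (I : Ideal (MvPolynomial (Fin n) K)) (g : MvPolynomial (Fin n) K)
    (j j' : ℕ) : Prop :=
  QInj I g j j' ∨ QSurj I g j j'

/-- The monomial with exponent vector `m` is a minimal generator of the monomial
ideal `I`. -/
def IsMinGen (I : Ideal (MvPolynomial (Fin n) K)) (m : Fin n →₀ ℕ) : Prop :=
  monomial m (1 : K) ∈ I ∧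
    ∀ i : Fin n, m i ≠ 0 → monomial (m - Finsupp.single i 1) (1 : K) ∉ I

section Aux

lemma mdeg_add {n : ℕ} (a b : Fin n →₀ ℕ) : mdeg (a + b) = mdeg a + mdeg b :=
  Finsupp.sum_add_index' (fun _ => rfl) (fun _ _ _ => rfl)

lemma mdeg_single {n : ℕ} (j : Fin n) (k : ℕ) : mdeg (Finsupp.single j k) = k :=
  Finsupp.sum_single_index rfl

lemma sub_single_add {n : ℕ} (μ : Fin n →₀ ℕ) (j : Fin n) (h : μ j ≠ 0) :
    μ - Finsupp.single j 1 + Finsupp.single j 1 = μ := by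
  ext a
  simp only [Finsupp.add_apply, Finsupp.tsub_apply, Finsupp.single_apply]
  split_ifs with hja
  · subst hja; omega
  · omega

lemma mdeg_sub_single {n : ℕ} (μ : Fin n →₀ ℕ) (j : Fin n) (h : μ j ≠ 0) :
    mdeg (μ - Finsupp.single j 1) + 1 = mdeg μ := by
  conv_rhs => rw [← sub_single_add μ j h]
  rw [mdeg_add, mdeg_single]

lemma exists_ne_zero_of_mdeg_ne_zero {n : ℕ} (μ : Fin n →₀ ℕ) (h : mdeg μ ≠ 0) :
    ∃ j, μ j ≠ 0 := by
  by_contra hc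
  push_neg at hc
  apply h
  have : μ = 0 := by ext a; simp [hc a]
  simp [this, mdeg]

lemma X_mul_monomial'' {K : Type*} [Field K] {n : ℕ} (j : Fin n) (w : Fin n →₀ ℕ) :
    (X j : MvPolynomial (Fin n) K) * monomial w 1 = monomial (Finsupp.single j 1 + w) 1 := by
  rw [X, monomial_mul, one_mul]

lemma monomial_mem_homog {K : Type*} [Field K] {n : ℕ} (μ : Fin n →₀ ℕ) :
    (monomial μ (1 : K)) ∈ homogeneousSubmodule (Fin n) K (mdeg μ) := by
  rw [mem_homogeneousSubmodule]
  exact isHomogeneous_monomial _ rfl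

end Aux

theorem stmt_14' {K : Type*} [Field K] {n : ℕ} (hn : 1 ≤ n) (I : Ideal (MvPolynomial (Fin n) K))
    (hmon : IsMonomialIdeal I) (hst : IsStableIdeal I)
    (hfd : FiniteDimensional K (MvPolynomial (Fin n) K ⧸ I))
    (hwl : ∀ j : ℕ, MulMaxRank I (X (⟨n - 1, Nat.sub_lt hn Nat.one_pos⟩ : Fin n)) j (j + 1))
    (d : ℕ)
    (hd : IsLeast {j : ℕ | ∃ m : Fin n →₀ ℕ,
        IsMinGen I m ∧ mdeg m = j ∧ m ⟨n - 1, Nat.sub_lt hn Nat.one_pos⟩ ≠ 0} d) :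
    ∀ m : Fin n →₀ ℕ, IsMinGen I m → d < mdeg m → m ⟨n - 1, Nat.sub_lt hn Nat.one_pos⟩ ≠ 0 := by
  set i : Fin n := ⟨n - 1, Nat.sub_lt hn Nat.one_pos⟩ with hi
  obtain ⟨m₀, hm₀gen, hm₀deg, hm₀i⟩ := hd.1
  have hd1 : 1 ≤ d := by
    rw [← hm₀deg, ← mdeg_sub_single m₀ i hm₀i]; omega
  -- the map ·x_n : (S/I)_{d-1} → (S/I)_d is not injective
  have hnotinj : ¬ QInj I (X i) (d - 1) d := by
    intro hinj
    have hw₀deg : mdeg (m₀ - Finsupp.single i 1) = d - 1 := by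
      have := mdeg_sub_single m₀ i hm₀i; omega
    have h1 : (Ideal.Quotient.mk I (monomial (m₀ - Finsupp.single i 1) (1 : K))) ∈ Qpiece I (d - 1) :=
      ⟨monomial (m₀ - Finsupp.single i 1) 1, by rw [← hw₀deg]; exact monomial_mem_homog (m₀ - Finsupp.single i 1), rfl⟩
    have h0 : (0 : MvPolynomial (Fin n) K ⧸ I) ∈ Qpiece I (d - 1) :=
      Submodule.zero_mem _
    have hmul : Ideal.Quotient.mk I (X i) * Ideal.Quotient.mk I (monomial (m₀ - Finsupp.single i 1) (1 : K)) =
        Ideal.Quotient.mk I (X i) * 0 := by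
      rw [mul_zero, ← map_mul, X_mul_monomial'', Ideal.Quotient.eq_zero_iff_mem]
      have : Finsupp.single i 1 + (m₀ - Finsupp.single i 1) = m₀ := by
        rw [add_comm]; exact sub_single_add m₀ i hm₀i
      rw [this]
      exact hm₀gen.1
    have := hinj _ h1 _ h0 hmul
    rw [Ideal.Quotient.eq_zero_iff_mem] at this
    exact hm₀gen.2 i hm₀i this
  have hsurj : QSurj I (X i) (d - 1) d := by
    have := hwl (d - 1)
    rw [show d - 1 + 1 = d by omega] at this
    exact this.resolve_left hnotinj
  -- every x_n-free monomial of degree ≥ d lies in I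
  have key : ∀ t (μ : Fin n →₀ ℕ), μ i = 0 → mdeg μ = d + t → monomial μ (1 : K) ∈ I := by
    intro t
    induction t with
    | zero =>
      intro μ hμi hμdeg
      have hq : (Ideal.Quotient.mk I (monomial μ (1 : K))) ∈ Qpiece I d :=
        ⟨monomial μ 1, by rw [show d = mdeg μ by omega]; exact monomial_mem_homog μ, rfl⟩
      obtain ⟨f, hf, hXf⟩ := hsurj _ hq
      obtain ⟨p, _, rfl⟩ := hf
      have hIsub : X i * p - monomial μ (1 : K) ∈ I := by
        rw [← Ideal.Quotient.eq]
        rw [← hXf, map_mul]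
        rfl
      have hsupp : μ ∈ (X i * p - monomial μ (1 : K)).support := by
        rw [mem_support_iff, coeff_sub, coeff_X_mul', coeff_monomial]
        simp only [Finsupp.mem_support_iff, hμi, ne_eq, not_true_eq_false, if_false,
          if_pos rfl]
        norm_num
      have := hmon _ hIsub μ hsupp
      exact this
    | succ t ih =>
      intro μ hμi hμdeg
      obtain ⟨j, hj⟩ := exists_ne_zero_of_mdeg_ne_zero μ (by omega)
      have hji : (μ - Finsupp.single j 1 : Fin n →₀ ℕ) i = 0 := by
        simp only [Finsupp.tsub_apply, hμi]; omega
      have hjd : mdeg (μ - Finsupp.single j 1) = d + t := by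
        have := mdeg_sub_single μ j hj; omega
      have hmem := ih (μ - Finsupp.single j 1) hji hjd
      have : monomial μ (1 : K) = X j * monomial (μ - Finsupp.single j 1) (1 : K) := by
        rw [X_mul_monomial'', add_comm, sub_single_add μ j hj]
      rw [this]
      exact I.mul_mem_left _ hmem
  intro m hmgen hmd hmi
  obtain ⟨j, hj⟩ := exists_ne_zero_of_mdeg_ne_zero m (by omega)
  apply hmgen.2 j hj
  apply key (mdeg m - 1 - d)
  · simp only [Finsupp.tsub_apply, hmi]; omega
  · have := mdeg_sub_single m j hj; omega


/-- Let `I` be an `𝔪`-primary stable monomial ideal such that `x_n` is a weak Lefschetz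
element on `S/I`, and let `d` be the least degree of a minimal generator divisible by
`x_n`. Then every minimal generator of degree `> d` is divisible by `x_n`. -/
theorem stmt_14 (hn : 1 ≤ n) (I : Ideal (MvPolynomial (Fin n) K))
    (hmon : IsMonomialIdeal I) (hst : IsStableIdeal I)
    (hfd : FiniteDimensional K (MvPolynomial (Fin n) K ⧸ I))
    (hwl : ∀ j : ℕ, MulMaxRank I (X (⟨n - 1, by omega⟩ : Fin n)) j (j + 1))
    (d : ℕ)
    (hd : IsLeast {j : ℕ | ∃ m : Fin n →₀ ℕ,
        IsMinGen I m ∧ mdeg m = j ∧ m ⟨n - 1, by omega⟩ ≠ 0} d) :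
    ∀ m : Fin n →₀ ℕ, IsMinGen I m → d < mdeg m → m ⟨n - 1, by omega⟩ ≠ 0 :=
  stmt_14' hn I hmon hst hfd hwl d hd
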